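/- Let K be a finite type with at least two elements and, for each κ ∈ K, let I κ and J κ be nonempty finite types; set Ω = Σ κ, (I κ × J κ) and D = card Ω, and let ρ_mix = (1/D) • (1 : Matrix Ω Ω ℂ) be the totally mixed state. Then for every ε > 0 there exists a positive semidefinite trace-1 matrix ρ' : Matrix Ω Ω ℂ that is not block-separable and satisfies ‖ρ' − ρ_mix‖ < ε (in the entrywise supremum norm on matrices). -/

import Mathlib

open scoped BigOperators ComplexOrder

attribute [local instance] Matrix.normedAddCommGroup

/-- A matrix on `Ω = Σ κ, I κ × J κ` is block-separable if it is a finite convex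
combination of rank-one projections onto unit vectors each supported in a single
block and there of product form. -/
def BlockSep {K : Type*} [Fintype K] {I J : K → Type*}
    [∀ κ, Fintype (I κ)] [∀ κ, Fintype (J κ)]
    (ρ : Matrix ((κ : K) × (I κ × J κ)) ((κ : K) × (I κ × J κ)) ℂ) : Prop :=
  ∃ (n : ℕ) (lam : Fin n → ℝ) (v : Fin n → ((κ : K) × (I κ × J κ)) → ℂ),
    (∀ t, 0 ≤ lam t) ∧ (∑ t, lam t = 1) ∧
    (∀ t, ∑ a, Complex.normSq (v t a) = 1) ∧
    (∀ t, ∃ (κ : K) (x : I κ → ℂ) (y : J κ → ℂ),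
      (∀ (i : I κ) (j : J κ), v t ⟨κ, (i, j)⟩ = x i * y j) ∧
      (∀ κ' : K, κ' ≠ κ → ∀ b : I κ' × J κ', v t ⟨κ', b⟩ = 0)) ∧
    ρ = ∑ t, (lam t : ℂ) • Matrix.of (fun a b => v t a * starRingEnd ℂ (v t b))

attribute [local instance] Matrix.normedSpace

/-- auxiliary: a real-nonneg scalar multiple of a PSD matrix is PSD. -/
lemma aux_smul_posSemidef {n : Type*} [Fintype n] {M : Matrix n n ℂ} (hM : M.PosSemidef)
    {c : ℝ} (hc : 0 ≤ c) : ((c:ℂ) • M).PosSemidef := by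
  rw [Matrix.posSemidef_iff_dotProduct_mulVec]
  constructor
  · unfold Matrix.IsHermitian
    rw [Matrix.conjTranspose_smul, hM.1.eq]
    norm_num
  · intro x
    rw [Matrix.smul_mulVec, dotProduct_smul]
    exact mul_nonneg (by exact_mod_cast hc) (hM.dotProduct_mulVec_nonneg x)

/-- auxiliary: an outer product is PSD. -/
lemma aux_outer_posSemidef {n : Type*} [Fintype n] (v : n → ℂ) :
    (Matrix.of (fun a b => v a * starRingEnd ℂ (v b))).PosSemidef := by
  rw [Matrix.posSemidef_iff_dotProduct_mulVec]
  constructor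
  · ext a b
    simp [Matrix.conjTranspose_apply, mul_comm]
  · intro x
    have : dotProduct (star x)
          ((Matrix.of (fun a b => v a * starRingEnd ℂ (v b))).mulVec x)
        = star (∑ b, starRingEnd ℂ (v b) * x b) * (∑ b, starRingEnd ℂ (v b) * x b) := by
      simp only [dotProduct, Matrix.mulVec, Matrix.of_apply, Pi.star_apply,
        star_sum, star_mul']
      rw [Finset.sum_mul]
      congr 1; ext a
      rw [Finset.mul_sum, Finset.mul_sum]
      congr 1; ext b
      simp only [starRingEnd_apply, star_star]
      ring
    rw [this]
    exact star_mul_self_nonneg _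

/-- auxiliary: block-separable matrices are block diagonal. -/
lemma aux_blockSep_offdiag {K : Type*} [Fintype K] {I J : K → Type*}
    [∀ κ, Fintype (I κ)] [∀ κ, Fintype (J κ)]
    {ρ : Matrix ((κ : K) × (I κ × J κ)) ((κ : K) × (I κ × J κ)) ℂ}
    (h : BlockSep ρ) (p q : (κ : K) × (I κ × J κ)) (hpq : p.1 ≠ q.1) :
    ρ p q = 0 := by
  obtain ⟨n, lam, v, -, -, -, hblock, hrep⟩ := h
  rw [hrep]
  rw [Matrix.sum_apply]
  refine Finset.sum_eq_zero fun t _ => ?_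
  obtain ⟨κ, x, y, -, hzero⟩ := hblock t
  obtain ⟨κp, bp⟩ := p
  obtain ⟨κq, bq⟩ := q
  simp only at hpq
  by_cases hp : κp = κ
  · subst hp
    have : v t ⟨κq, bq⟩ = 0 := hzero κq (fun h => hpq h.symm) bq
    simp [this]
  · have : v t ⟨κp, bp⟩ = 0 := hzero κp hp bp
    simp [this]

/-- the totally mixed state lies on the border of the set of separable
states: every neighbourhood of it (in the entrywise supremum norm) contains a
positive semidefinite trace-one matrix that is not block-separable. -/
theorem totally_mixed_state_on_border_of_separable_states
    {K : Type*} [Fintype K] [DecidableEq K] (hK : 2 ≤ Fintype.card K)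
    {I J : K → Type*}
    [∀ κ, Fintype (I κ)] [∀ κ, Nonempty (I κ)] [∀ κ, DecidableEq (I κ)]
    [∀ κ, Fintype (J κ)] [∀ κ, Nonempty (J κ)] [∀ κ, DecidableEq (J κ)]
    (ε : ℝ) (hε : 0 < ε) :
    ∃ ρ' : Matrix ((κ : K) × (I κ × J κ)) ((κ : K) × (I κ × J κ)) ℂ,
      ρ'.PosSemidef ∧ ρ'.trace = 1 ∧ ¬ BlockSep ρ' ∧
      ‖ρ' - ((Fintype.card ((κ : K) × (I κ × J κ)) : ℂ))⁻¹ •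
          (1 : Matrix ((κ : K) × (I κ × J κ)) ((κ : K) × (I κ × J κ)) ℂ)‖ < ε := by
  classical
  set Ω := (κ : K) × (I κ × J κ) with hΩ
  obtain ⟨κ₁, κ₂, hκ⟩ := Fintype.exists_pair_of_one_lt_card (show 1 < Fintype.card K by omega)
  set a : Ω := ⟨κ₁, (Classical.arbitrary _, Classical.arbitrary _)⟩ with ha
  set b : Ω := ⟨κ₂, (Classical.arbitrary _, Classical.arbitrary _)⟩ with hb
  have hab : a ≠ b := fun h => hκ (congrArg Sigma.fst h)
  set v : Ω → ℂ := fun ω => if ω = a then 1 else if ω = b then 1 else 0 with hv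
  set M : Matrix Ω Ω ℂ := Matrix.of (fun p q => v p * starRingEnd ℂ (v q)) with hM
  have hMps : M.PosSemidef := aux_outer_posSemidef v
  have hΩne : Nonempty Ω := ⟨a⟩
  set D : ℕ := Fintype.card Ω with hD
  have hD0 : 0 < D := Fintype.card_pos
  have hDC : (D : ℂ) ≠ 0 := by exact_mod_cast hD0.ne'
  have hDR : (D : ℝ) ≠ 0 := by exact_mod_cast hD0.ne'
  -- trace of M is 2
  have htrM : M.trace = 2 := by
    have : ∀ ω : Ω, M ω ω = (if ω = a then 1 else 0) + (if ω = b then 1 else 0) := by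
      intro ω
      by_cases h1 : ω = a
      · subst h1; simp [hM, hv, hab]
      · by_cases h2 : ω = b <;> simp [hM, hv, h1, h2, Ne.symm hab]
    unfold Matrix.trace
    simp only [Matrix.diag_apply]
    rw [Finset.sum_congr rfl (fun ω _ => this ω), Finset.sum_add_distrib]
    rw [Finset.sum_ite_eq', Finset.sum_ite_eq']
    simp
    norm_num
  set C : ℝ := ‖M‖ + 2 * ‖(1 : Matrix Ω Ω ℂ)‖ / D with hC
  have hC0 : 0 ≤ C := by
    have : (0:ℝ) ≤ 2 * ‖(1 : Matrix Ω Ω ℂ)‖ / D :=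
      div_nonneg (by positivity) (by positivity)
    positivity
  have hC1 : 0 < C + 1 := by linarith
  set δ : ℝ := min (1/4) (ε / (C + 1)) with hδ
  have hδ0 : 0 < δ := lt_min (by norm_num) (div_pos hε hC1)
  have hδ4 : δ ≤ 1/4 := min_le_left _ _
  have hδε : δ ≤ ε / (C + 1) := min_le_right _ _
  set c : ℝ := (1 - 2*δ)/D with hc
  have hc0 : 0 ≤ c := div_nonneg (by linarith) (by positivity)
  refine ⟨((c:ℝ):ℂ) • 1 + ((δ:ℝ):ℂ) • M, ?_, ?_, ?_, ?_⟩
  · exact (aux_smul_posSemidef Matrix.PosSemidef.one hc0).add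
      (aux_smul_posSemidef hMps hδ0.le)
  · rw [Matrix.trace_add, Matrix.trace_smul, Matrix.trace_smul, Matrix.trace_one, htrM]
    have hcD : (c * D : ℝ) = 1 - 2*δ := by
      rw [hc]; field_simp
    have : ((c:ℝ):ℂ) * (D:ℂ) = ((1 - 2*δ : ℝ) : ℂ) := by
      rw [← hcD]; push_cast; ring
    simp only [smul_eq_mul]
    rw [this]
    push_cast
    ring
  · intro hsep
    have := aux_blockSep_offdiag hsep a b (by simpa [ha, hb] using hκ)
    have hva : v a = 1 := by simp [hv]
    have hvb : v b = 1 := by simp [hv, Ne.symm hab]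
    rw [Matrix.add_apply, Matrix.smul_apply, Matrix.smul_apply,
      Matrix.one_apply_ne hab] at this
    rw [show M a b = v a * starRingEnd ℂ (v b) from rfl, hva, hvb] at this
    simp only [smul_eq_mul, mul_zero, mul_one, map_one, zero_add] at this
    exact hδ0.ne' (by exact_mod_cast this)
  · have hdiff : ((c:ℝ):ℂ) • (1 : Matrix Ω Ω ℂ) + ((δ:ℝ):ℂ) • M - ((D:ℂ))⁻¹ • 1
        = ((δ:ℝ):ℂ) • M + (((c:ℝ):ℂ) - ((D:ℂ))⁻¹) • 1 := by
      module
    have hscal : (((c:ℝ):ℂ) - ((D:ℂ))⁻¹) = ((-(2*δ)/D : ℝ) : ℂ) := by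
      rw [hc]
      push_cast
      field_simp
      ring
    rw [hdiff, hscal]
    have hbound : ‖((δ:ℝ):ℂ) • M + (((-(2*δ)/D : ℝ)):ℂ) • (1 : Matrix Ω Ω ℂ)‖
        ≤ δ * ‖M‖ + (2*δ/D) * ‖(1 : Matrix Ω Ω ℂ)‖ := by
      refine (norm_add_le _ _).trans ?_
      rw [norm_smul, norm_smul]
      have h1 : ‖((δ:ℝ):ℂ)‖ = δ := by
        rw [Complex.norm_real, Real.norm_eq_abs, abs_of_nonneg hδ0.le]
      have h2 : ‖(((-(2*δ)/D : ℝ)):ℂ)‖ = 2*δ/D := by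
        rw [Complex.norm_real, Real.norm_eq_abs, abs_of_nonpos, neg_div, neg_neg]
        exact div_nonpos_of_nonpos_of_nonneg (by linarith) (by positivity)
      rw [h1, h2]
    refine hbound.trans_lt ?_
    have heq : δ * ‖M‖ + (2*δ/D) * ‖(1 : Matrix Ω Ω ℂ)‖ = δ * C := by
      rw [hC]; field_simp
    rw [heq]
    calc δ * C ≤ (ε / (C + 1)) * C := mul_le_mul_of_nonneg_right hδε hC0
    _ < ε := by
        rw [div_mul_eq_mul_div, div_lt_iff₀ hC1]
        nlinarith
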